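/- arXiv:1104.2096 — 4 statements merged into one kernel-verified Lean document; each statement's English description precedes it below -/
import Mathlib

section
/- For any two projections A and B on a finite-dimensional Hilbert space and any density operator ρ, tr(ρA) + tr(ρB) ≤ 1 + ‖AB‖ (the Landau–Pollak type inequality). -/
open scoped ComplexOrder

/-- Operator norm of a matrix, viewed as an operator on Euclidean space. -/
noncomputable def opNorm {N : ℕ} (A : Matrix (Fin N) (Fin N) ℂ) : ℝ :=
  ‖Matrix.toEuclideanCLM (𝕜 := ℂ) A‖

/-- An orthogonal projection. -/
def IsProjection {N : ℕ} (A : Matrix (Fin N) (Fin N) ℂ) : Prop :=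
  A.IsHermitian ∧ A * A = A

/-- A density operator: positive semidefinite with trace one. -/
def IsDensity {N : ℕ} (ρ : Matrix (Fin N) (Fin N) ℂ) : Prop :=
  ρ.PosSemidef ∧ ρ.trace = 1

open Matrix in
lemma lp_eig_bound {N : ℕ} (A B : Matrix (Fin N) (Fin N) ℂ)
    (hA : IsProjection A) (hB : IsProjection B)
    (hM : (A + B).IsHermitian) (i : Fin N) :
    hM.eigenvalues i ≤ 1 + opNorm (A * B) := by
  set μ : ℝ := hM.eigenvalues i with hμdef
  by_cases hle : μ ≤ 1
  · have : (0:ℝ) ≤ opNorm (A * B) := norm_nonneg _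
    linarith
  push_neg at hle
  set x : Fin N → ℂ := ⇑(hM.eigenvectorBasis i) with hxdef
  have hxne : x ≠ 0 := by
    intro h
    exact hM.eigenvectorBasis.orthonormal.ne_zero i (by ext j; exact congrFun h j)
  have hx : (A + B) *ᵥ x = (μ : ℂ) • x := by
    have h := hM.mulVec_eigenvectorBasis i
    rw [← hxdef, ← hμdef] at h
    rw [h]; ext j; simp [Complex.real_smul]
  set u : Fin N → ℂ := A *ᵥ x with hudef
  set v : Fin N → ℂ := B *ᵥ x with hvdef
  have huv : u + v = (μ : ℂ) • x := by rw [hudef, hvdef, ← add_mulVec, hx]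
  have hAu : A *ᵥ u = u := by rw [hudef, mulVec_mulVec, hA.2]
  have hBv : B *ᵥ v = v := by rw [hvdef, mulVec_mulVec, hB.2]
  have hvx : v = (μ : ℂ) • x - u := by rw [← huv]; abel
  have hux : u = (μ : ℂ) • x - v := by rw [← huv]; abel
  have hAv : A *ᵥ v = ((μ : ℂ) - 1) • u := by
    rw [hvx, mulVec_sub, mulVec_smul, ← hudef, hAu, sub_smul, one_smul]
  have hBu : B *ᵥ u = ((μ : ℂ) - 1) • v := by
    rw [hux, mulVec_sub, mulVec_smul, ← hvdef, hBv, sub_smul, one_smul]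
  -- u ≠ 0
  have hune : u ≠ 0 := by
    intro h0
    have hveq : v = (μ : ℂ) • x := by rw [hvx, h0, sub_zero]
    have : ((μ : ℂ) * μ) • x = (μ : ℂ) • x := by
      have := hBv
      rw [hveq, mulVec_smul, ← hvdef, hveq, smul_smul] at this
      exact this
    have hzz : ((μ : ℂ) * μ - μ) • x = 0 := by
      rw [sub_smul, this, sub_self]
    rcases smul_eq_zero.mp hzz with h | h
    · have hr : μ * μ - μ = 0 := by exact_mod_cast h
      nlinarith
    · exact hxne h
  -- inner product computations
  have key1 : ∀ w : Fin N → ℂ, star u ⬝ᵥ w = star x ⬝ᵥ (A *ᵥ w) := by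
    intro w
    rw [hudef, star_mulVec, ← dotProduct_mulVec, hA.1.eq]
  have key2 : ∀ w : Fin N → ℂ, star v ⬝ᵥ w = star x ⬝ᵥ (B *ᵥ w) := by
    intro w
    rw [hvdef, star_mulVec, ← dotProduct_mulVec, hB.1.eq]
  have hdot_u : star x ⬝ᵥ u = star u ⬝ᵥ u := by rw [key1 u, hAu]
  have hdot_v : star x ⬝ᵥ v = star v ⬝ᵥ v := by rw [key2 v, hBv]
  have h1 : star u ⬝ᵥ v = ((μ : ℂ) - 1) * (star u ⬝ᵥ u) := by
    rw [key1 v, hAv, dotProduct_smul, smul_eq_mul, hdot_u]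
  have h2 : star v ⬝ᵥ u = ((μ : ℂ) - 1) * (star v ⬝ᵥ v) := by
    rw [key2 u, hBu, dotProduct_smul, smul_eq_mul, hdot_v]
  -- pass to EuclideanSpace
  set u' : EuclideanSpace ℂ (Fin N) := (WithLp.equiv 2 (Fin N → ℂ)).symm u with hu'
  set v' : EuclideanSpace ℂ (Fin N) := (WithLp.equiv 2 (Fin N → ℂ)).symm v with hv'
  have hiu : star u ⬝ᵥ u = ((‖u'‖ ^ 2 : ℝ) : ℂ) := by
    rw [show star u ⬝ᵥ u = inner ℂ u' u' from dotProduct_comm _ _, inner_self_eq_norm_sq_to_K]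
    norm_cast
  have hiv : star v ⬝ᵥ v = ((‖v'‖ ^ 2 : ℝ) : ℂ) := by
    rw [show star v ⬝ᵥ v = inner ℂ v' v' from dotProduct_comm _ _, inner_self_eq_norm_sq_to_K]
    norm_cast
  have hstar : star (star u ⬝ᵥ v) = star v ⬝ᵥ u := (star_dotProduct v u).symm
  have h3 := hstar
  rw [h1, h2, hiu, hiv] at h3
  simp only [star_mul', map_sub, _root_.map_one, Complex.star_def, Complex.conj_ofReal] at h3
  have h4 : (μ - 1) * ‖u'‖ ^ 2 = (μ - 1) * ‖v'‖ ^ 2 := by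
    exact_mod_cast h3
  have hsq : ‖u'‖ ^ 2 = ‖v'‖ ^ 2 :=
    mul_left_cancel₀ (ne_of_gt (by linarith : (0:ℝ) < μ - 1)) h4
  have hnormeq : ‖u'‖ = ‖v'‖ := by
    have h5 := norm_nonneg u'
    have h6 := norm_nonneg v'
    nlinarith
  have hu'pos : 0 < ‖u'‖ := by
    rw [norm_pos_iff]
    intro h
    apply hune
    have := congrArg (WithLp.equiv 2 (Fin N → ℂ)) (h : u' = 0)
    simpa [hu'] using this
  -- operator norm bound
  have hABv : (A * B) *ᵥ v = ((μ : ℂ) - 1) • u := by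
    rw [← mulVec_mulVec, hBv, hAv]
  have happ : Matrix.toEuclideanCLM (𝕜 := ℂ) (A * B) v' = ((μ : ℂ) - 1) • u' := by
    rw [hv', WithLp.equiv_symm_apply, Matrix.toEuclideanCLM_toLp, hABv, hu']
    simp
  have hle2 := (Matrix.toEuclideanCLM (𝕜 := ℂ) (A * B)).le_opNorm v'
  rw [happ, norm_smul] at hle2
  have hnc : ‖(μ : ℂ) - 1‖ = μ - 1 := by
    rw [show (μ:ℂ) - 1 = ((μ - 1 : ℝ) : ℂ) by push_cast; ring]
    rw [Complex.norm_real, Real.norm_eq_abs, abs_of_pos (by linarith)]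
  rw [hnc, hnormeq] at hle2
  have hv'pos : 0 < ‖v'‖ := by rwa [hnormeq] at hu'pos
  have hkey : μ - 1 ≤ ‖Matrix.toEuclideanCLM (𝕜 := ℂ) (A * B)‖ := by
    by_contra hcon
    push_neg at hcon
    nlinarith
  unfold opNorm
  linarith

open Matrix in
/-- Landau–Pollak type inequality: tr(ρA) + tr(ρB) ≤ 1 + ‖AB‖. -/
theorem landau_pollak {N : ℕ} (A B ρ : Matrix (Fin N) (Fin N) ℂ)
    (hA : IsProjection A) (hB : IsProjection B) (hρ : IsDensity ρ) :
    ((ρ * A).trace).re + ((ρ * B).trace).re ≤ 1 + opNorm (A * B) := by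
  have hM : (A + B).IsHermitian := hA.1.add hB.1
  have key := lp_eig_bound A B hA hB hM
  set V : Matrix (Fin N) (Fin N) ℂ := ↑(hM.eigenvectorUnitary) with hV
  set D : Matrix (Fin N) (Fin N) ℂ := Matrix.diagonal (RCLike.ofReal ∘ hM.eigenvalues) with hD
  set σ : Matrix (Fin N) (Fin N) ℂ := star V * ρ * V with hσdef
  have hσ : σ.PosSemidef := by
    rw [hσdef, Matrix.star_eq_conjTranspose]
    exact hρ.1.conjTranspose_mul_mul_same V
  have hUU : V * star V = 1 := by
    have h := hM.eigenvectorUnitary.2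
    rw [Unitary.mem_iff] at h
    exact h.2
  have htrσ : σ.trace = 1 := by
    rw [hσdef, Matrix.trace_mul_cycle, hUU, Matrix.one_mul, hρ.2]
  have hdiag : ∀ i, 0 ≤ (σ i i).re := by
    intro i
    have h := hσ.re_dotProduct_nonneg (Pi.single i 1)
    simpa [dotProduct, Matrix.mulVec_single, Pi.single_apply, apply_ite] using h
  have htr : (ρ * (A + B)).trace = ∑ i, σ i i * ((hM.eigenvalues i : ℝ) : ℂ) := by
    conv_lhs => rw [hM.spectral_theorem, Unitary.conjStarAlgAut_apply]
    rw [show ρ * (V * D * star V) = (ρ * V * D) * star V by simp only [Matrix.mul_assoc]]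
    rw [Matrix.trace_mul_cycle]
    rw [show star V * (ρ * V) * D = σ * D by rw [hσdef]; simp only [Matrix.mul_assoc]]
    rw [hσdef, hD]
    simp [Matrix.trace, Matrix.diag, Matrix.mul_diagonal]
  have hgoal : ((ρ * A).trace).re + ((ρ * B).trace).re = ((ρ * (A + B)).trace).re := by
    rw [Matrix.mul_add, Matrix.trace_add, Complex.add_re]
  rw [hgoal, htr]
  rw [Complex.re_sum]
  have hterm : ∀ i, (σ i i * ((hM.eigenvalues i : ℝ) : ℂ)).re
      = (σ i i).re * hM.eigenvalues i := by
    intro i; simp [Complex.mul_re]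
  calc ∑ i, (σ i i * ((hM.eigenvalues i : ℝ) : ℂ)).re
      = ∑ i, (σ i i).re * hM.eigenvalues i := by simp_rw [hterm]
    _ ≤ ∑ i, (σ i i).re * (1 + opNorm (A * B)) := by
        apply Finset.sum_le_sum
        intro i _
        exact mul_le_mul_of_nonneg_left (key i) (hdiag i)
    _ = (∑ i, (σ i i).re) * (1 + opNorm (A * B)) := by rw [← Finset.sum_mul]
    _ = 1 + opNorm (A * B) := by
        have h1 : (∑ i, (σ i i).re) = 1 := by
          have h := congrArg Complex.re htrσ
          rw [Matrix.trace] at h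
          simpa [Complex.re_sum, Matrix.diag] using h
        rw [h1, one_mul]
end

section
/- For projections P₁,…,Pₘ (pairwise orthogonal, i.e. PᵢPⱼ = δᵢⱼPᵢ) and projections Q₁,…,Qₙ (pairwise orthogonal), with A = Σᵢ Pᵢ and B = Σⱼ Qⱼ, one has ‖AB‖² ≤ m·n·max_{i,j} tr(PᵢQⱼ). -/
open scoped ComplexOrder
open scoped Matrix.Norms.L2Operator

lemma opNorm_eq_norm {N : ℕ} (A : Matrix (Fin N) (Fin N) ℂ) : opNorm A = ‖A‖ := rfl

lemma norm_le_one_of_star_mul_self {N : ℕ} (M : Matrix (Fin N) (Fin N) ℂ)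
    (h : M.conjTranspose * M = M) : ‖M‖ ≤ 1 := by
  have h2 := CStarRing.norm_star_mul_self (x := M)
  rw [Matrix.star_eq_conjTranspose, h] at h2
  nlinarith [norm_nonneg M]

lemma diag_eq_sum {N : ℕ} (d : Fin N → ℂ) :
    Matrix.diagonal d = ∑ i, d i • Matrix.single i i (1 : ℂ) := by
  ext a b
  by_cases hab : a = b
  · subst hab
    simp [Matrix.diagonal_apply, Matrix.sum_apply, Matrix.single, Matrix.smul_apply,
      Finset.sum_ite_eq, eq_comm]
  · rw [Matrix.diagonal_apply_ne _ hab]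
    rw [Matrix.sum_apply]
    symm
    apply Finset.sum_eq_zero
    intro x _
    have hx : ¬(x = a ∧ x = b) := fun ⟨h1, h2⟩ => hab (h1.symm.trans h2)
    simp [Matrix.single, Matrix.smul_apply, hx]

lemma norm_stdBasis_le {N : ℕ} (i : Fin N) :
    ‖Matrix.single i i (1 : ℂ)‖ ≤ 1 := by
  apply norm_le_one_of_star_mul_self
  ext a b
  simp [Matrix.conjTranspose_apply, Matrix.mul_apply, Matrix.single,
    Finset.sum_ite_eq, ite_and]
  aesop

lemma norm_diag_le {N : ℕ} (d : Fin N → ℂ) :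
    ‖Matrix.diagonal d‖ ≤ ∑ i, ‖d i‖ := by
  rw [diag_eq_sum]
  refine (norm_sum_le _ _).trans (Finset.sum_le_sum fun i _ => ?_)
  rw [norm_smul]
  calc ‖d i‖ * ‖Matrix.single i i (1:ℂ)‖ ≤ ‖d i‖ * 1 := by
        gcongr; exact norm_stdBasis_le i
    _ = ‖d i‖ := mul_one _

lemma norm_le_trace_of_posSemidef {N : ℕ} (M : Matrix (Fin N) (Fin N) ℂ)
    (hM : M.PosSemidef) : ‖M‖ ≤ M.trace.re := by
  rcases subsingleton_or_nontrivial (Matrix (Fin N) (Fin N) ℂ) with h | h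
  · simp [Subsingleton.elim M 0]
  have hH := hM.1
  have hspec := hH.spectral_theorem
  have hU : (hH.eigenvectorUnitary : Matrix (Fin N) (Fin N) ℂ) ∈ unitary _ :=
    hH.eigenvectorUnitary.2
  have htr : M.trace.re = ∑ i, hH.eigenvalues i := by
    conv_lhs => rw [hspec, Unitary.conjStarAlgAut_apply]
    rw [Matrix.trace_mul_cycle, Matrix.mem_unitaryGroup_iff'.mp hU, one_mul,
      Matrix.trace_diagonal]
    simp [Complex.ofReal_re]
  rw [htr]
  conv_lhs => rw [hspec, Unitary.conjStarAlgAut_apply]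
  calc ‖(hH.eigenvectorUnitary : Matrix (Fin N) (Fin N) ℂ) *
        Matrix.diagonal (RCLike.ofReal ∘ hH.eigenvalues) *
        star (hH.eigenvectorUnitary : Matrix (Fin N) (Fin N) ℂ)‖
      ≤ ‖(hH.eigenvectorUnitary : Matrix (Fin N) (Fin N) ℂ) *
        Matrix.diagonal (RCLike.ofReal ∘ hH.eigenvalues)‖ * ‖star (hH.eigenvectorUnitary : Matrix (Fin N) (Fin N) ℂ)‖ := norm_mul_le _ _
    _ ≤ ‖(hH.eigenvectorUnitary : Matrix (Fin N) (Fin N) ℂ)‖ *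
        ‖Matrix.diagonal (RCLike.ofReal ∘ hH.eigenvalues)‖ * ‖star (hH.eigenvectorUnitary : Matrix (Fin N) (Fin N) ℂ)‖ := by
        gcongr; exact norm_mul_le _ _
    _ = ‖Matrix.diagonal (RCLike.ofReal ∘ hH.eigenvalues)‖ := by
        rw [Matrix.star_eq_conjTranspose, Matrix.l2_opNorm_conjTranspose, CStarRing.norm_of_mem_unitary hU]; ring
    _ ≤ ∑ i, ‖(RCLike.ofReal ∘ hH.eigenvalues : Fin N → ℂ) i‖ :=
        norm_diag_le _
    _ ≤ ∑ i, hH.eigenvalues i := by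
        apply Finset.sum_le_sum
        intro i _
        rw [show ((RCLike.ofReal ∘ hH.eigenvalues : Fin N → ℂ) i) = ((hH.eigenvalues i : ℝ) : ℂ) from rfl,
          Complex.norm_real, Real.norm_eq_abs]
        exact le_of_eq (abs_of_nonneg (hM.eigenvalues_nonneg i))

/-- For two families of mutually orthogonal projections with sums A and B,
    ‖AB‖² ≤ m·n·max_{i,j} tr(PᵢQⱼ). -/
theorem opNorm_sq_le_card_mul_max_trace {N m n : ℕ} [NeZero m] [NeZero n]
    (P : Fin m → Matrix (Fin N) (Fin N) ℂ) (Q : Fin n → Matrix (Fin N) (Fin N) ℂ)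
    (hPproj : ∀ i, IsProjection (P i))
    (hQproj : ∀ j, IsProjection (Q j))
    (hPorth : ∀ i i', P i * P i' = if i = i' then P i else 0)
    (hQorth : ∀ j j', Q j * Q j' = if j = j' then Q j else 0) :
    opNorm ((∑ i, P i) * (∑ j, Q j)) ^ 2 ≤
      (m : ℝ) * n *
        Finset.univ.sup' Finset.univ_nonempty
          (fun p : Fin m × Fin n => ((P p.1 * Q p.2).trace).re) := by
  classical
  set A := ∑ i, P i with hA
  set B := ∑ j, Q j with hB
  set Mx := Finset.univ.sup' Finset.univ_nonempty
      (fun p : Fin m × Fin n => ((P p.1 * Q p.2).trace).re) with hMx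
  have hAH : A.conjTranspose = A := by
    rw [hA, Matrix.conjTranspose_sum]
    exact Finset.sum_congr rfl fun i _ => (hPproj i).1
  have hBH : B.conjTranspose = B := by
    rw [hB, Matrix.conjTranspose_sum]
    exact Finset.sum_congr rfl fun j _ => (hQproj j).1
  have hAA : A * A = A := by
    rw [hA, Finset.sum_mul_sum]
    simp [hPorth]
  have hBB : B * B = B := by
    rw [hB, Finset.sum_mul_sum]
    simp [hQorth]
  have hpsd : ((A * B).conjTranspose * (A * B)).PosSemidef :=
    Matrix.posSemidef_conjTranspose_mul_self _
  have h2 : (A * B).conjTranspose * (A * B) = B * A * B := by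
    rw [Matrix.conjTranspose_mul, hAH, hBH]
    calc B * A * (A * B) = B * A * A * B := by rw [mul_assoc (B * A) A B]
      _ = B * (A * A) * B := by rw [mul_assoc B A A]
      _ = B * A * B := by rw [hAA]
  have h3 : (B * A * B).trace = (A * B).trace := by
    rw [Matrix.trace_mul_cycle, hBB, Matrix.trace_mul_comm]
  have h4 : (A * B).trace = ∑ i, ∑ j, (P i * Q j).trace := by
    rw [hA, hB, Finset.sum_mul_sum]
    rw [Matrix.trace_sum]
    exact Finset.sum_congr rfl fun i _ => Matrix.trace_sum _ _
  calc opNorm (A * B) ^ 2 = ‖(A * B).conjTranspose * (A * B)‖ := by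
        rw [opNorm_eq_norm, sq, ← CStarRing.norm_star_mul_self, Matrix.star_eq_conjTranspose]
    _ ≤ ((A * B).conjTranspose * (A * B)).trace.re := norm_le_trace_of_posSemidef _ hpsd
    _ = ∑ i, ∑ j, ((P i * Q j).trace).re := by
        rw [h2, h3, h4]
        simp [Complex.re_sum]
    _ = ∑ p : Fin m × Fin n, ((P p.1 * Q p.2).trace).re := by
        rw [← Finset.sum_product']
        rfl
    _ ≤ (Finset.univ : Finset (Fin m × Fin n)).card • Mx :=
        Finset.sum_le_card_nsmul _ _ _ fun p _ =>
          hMx ▸ Finset.le_sup' (fun p : Fin m × Fin n => ((P p.1 * Q p.2).trace).re)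
            (Finset.mem_univ p)
    _ = (m : ℝ) * n * Mx := by
        simp only [Finset.card_univ, Fintype.card_prod, Fintype.card_fin, nsmul_eq_mul,
          Nat.cast_mul]
end

section
/- Let A = {A_x}_{x∈Ω_A} and B = {B_y}_{y∈Ω_B} be PVMs on an N-dimensional Hilbert space, with (Ω_A,d_A), (Ω_B,d_B) finite metric spaces. For any state ρ and ε₁,ε₂ ∈ [0,1] with ε₁+ε₂ ≤ 1, the overall widths satisfy max_x |O_{d_A}(x, W_{ε₁}(ρ^A))| · max_y |O_{d_B}(y, W_{ε₂}(ρ^B))| ≥ (1-ε₁-ε₂)² / max_{x,y} tr(A_x B_y). -/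
open scoped ComplexOrder

/-- The ball O_d(x,w) = {y : d(x,y) ≤ w/2} in a finite metric space. -/
noncomputable def mball {Ω : Type*} [Fintype Ω] [MetricSpace Ω] (x : Ω) (w : ℝ) :
    Finset Ω :=
  Finset.univ.filter (fun y => dist x y ≤ w / 2)

/-- The overall width of a probability distribution at confidence level 1-ε:
    W_ε(p) = inf{w > 0 : ∃ x, p(O_d(x,w)) ≥ 1-ε}. -/
noncomputable def overallWidth {Ω : Type*} [Fintype Ω] [MetricSpace Ω]
    (ε : ℝ) (p : Ω → ℝ) : ℝ :=
  sInf {w : ℝ | 0 < w ∧ ∃ x : Ω, 1 - ε ≤ ∑ y ∈ mball x w, p y}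

/-- The outcome distribution of a measurement A in the state ρ. -/
noncomputable def probDist {N : ℕ} {Ω : Type*}
    (ρ : Matrix (Fin N) (Fin N) ℂ) (A : Ω → Matrix (Fin N) (Fin N) ℂ) (x : Ω) : ℝ :=
  ((ρ * A x).trace).re

section AuxUW
open Matrix
variable {N : ℕ}

lemma proj_psd {A : Matrix (Fin N) (Fin N) ℂ} (h : IsProjection A) : A.PosSemidef := by
  have hA : A = Aᴴ * A := by rw [h.1.eq, h.2]
  rw [hA]; exact Matrix.posSemidef_conjTranspose_mul_self A

lemma psd_diag_re_nonneg {X : Matrix (Fin N) (Fin N) ℂ} (hX : X.PosSemidef) (i : Fin N) :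
    0 ≤ (X i i).re := by
  have := hX.re_dotProduct_nonneg (Pi.single i 1)
  simpa [dotProduct, Matrix.mulVec, Pi.single_apply] using this

lemma psd_trace_re_nonneg {X : Matrix (Fin N) (Fin N) ℂ} (hX : X.PosSemidef) :
    0 ≤ (X.trace).re := by
  rw [Matrix.trace, Complex.re_sum]
  exact Finset.sum_nonneg fun i _ => psd_diag_re_nonneg hX i

lemma trace_mul_psd_nonneg {M K : Matrix (Fin N) (Fin N) ℂ} (hM : M.PosSemidef)
    (hK : K.PosSemidef) : 0 ≤ ((M * K).trace).re := by
  obtain ⟨C, rfl⟩ : ∃ C : Matrix (Fin N) (Fin N) ℂ, M = Cᴴ * C := by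
    open scoped MatrixOrder in exact CStarAlgebra.nonneg_iff_eq_star_mul_self.mp hM.nonneg
  obtain ⟨D, rfl⟩ : ∃ D : Matrix (Fin N) (Fin N) ℂ, K = Dᴴ * D := by
    open scoped MatrixOrder in exact CStarAlgebra.nonneg_iff_eq_star_mul_self.mp hK.nonneg
  have h : (Cᴴ * C * (Dᴴ * D)).trace = (((C * Dᴴ)ᴴ) * (C * Dᴴ)).trace := by
    rw [Matrix.conjTranspose_mul, Matrix.conjTranspose_conjTranspose]
    rw [show Cᴴ * C * (Dᴴ * D) = Cᴴ * (C * Dᴴ * D) by simp only [Matrix.mul_assoc],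
      Matrix.trace_mul_comm, show C * Dᴴ * D * Cᴴ = (C * Dᴴ) * (D * Cᴴ) by
        simp only [Matrix.mul_assoc], Matrix.trace_mul_comm]
  rw [h]
  exact psd_trace_re_nonneg (Matrix.posSemidef_conjTranspose_mul_self _)

lemma cs_row (a b : Fin N → ℂ) :
    Complex.normSq (∑ j, a j * b j) ≤ (∑ j, Complex.normSq (a j)) * (∑ j, Complex.normSq (b j)) := by
  set x : EuclideanSpace ℂ (Fin N) := WithLp.toLp 2 (fun j => star (a j)) with hx
  set y : EuclideanSpace ℂ (Fin N) := WithLp.toLp 2 b with hy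
  have h := norm_inner_le_norm (𝕜 := ℂ) x y
  have h2 : ‖(inner ℂ x y : ℂ)‖ ^ 2 ≤ ‖x‖ ^ 2 * ‖y‖ ^ 2 := by
    rw [← mul_pow]; exact pow_le_pow_left₀ (norm_nonneg _) h 2
  have hi : (inner ℂ x y : ℂ) = ∑ j, a j * b j := by
    simp [hx, hy, PiLp.inner_apply, RCLike.inner_apply, mul_comm]
  have hna : ‖x‖ ^ 2 = ∑ j, Complex.normSq (a j) := by
    rw [EuclideanSpace.norm_eq, Real.sq_sqrt (by positivity)]
    simp [hx, Complex.sq_norm, Complex.normSq_conj]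
  have hnb : ‖y‖ ^ 2 = ∑ j, Complex.normSq (b j) := by
    rw [EuclideanSpace.norm_eq, Real.sq_sqrt (by positivity)]
    simp [hy, Complex.sq_norm]
  rw [hi, hna, hnb] at h2
  calc Complex.normSq (∑ j, a j * b j) = ‖∑ j, a j * b j‖ ^ 2 := by
        rw [← Complex.sq_norm]
    _ ≤ _ := h2

lemma rayleigh {M : Matrix (Fin N) (Fin N) ℂ} (hM : M.PosSemidef) (w : Fin N → ℂ) :
    (star w ⬝ᵥ (M *ᵥ w)).re ≤ M.trace.re * ∑ i, Complex.normSq (w i) := by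
  obtain ⟨C, rfl⟩ : ∃ C : Matrix (Fin N) (Fin N) ℂ, M = Cᴴ * C := by
    open scoped MatrixOrder in exact CStarAlgebra.nonneg_iff_eq_star_mul_self.mp hM.nonneg
  have key : star w ⬝ᵥ ((Cᴴ * C) *ᵥ w) = star (C *ᵥ w) ⬝ᵥ (C *ᵥ w) := by
    rw [← Matrix.mulVec_mulVec, Matrix.dotProduct_mulVec, ← Matrix.star_mulVec]
  rw [key]
  have hdot : (star (C *ᵥ w) ⬝ᵥ (C *ᵥ w)).re = ∑ i, Complex.normSq ((C *ᵥ w) i) := by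
    simp [dotProduct, Complex.re_sum, Complex.normSq_eq_conj_mul_self, Complex.normSq_apply]
  rw [hdot]
  have htr : (Cᴴ * C).trace.re = ∑ j, ∑ i, Complex.normSq (C i j) := by
    simp [Matrix.trace, Matrix.mul_apply, Complex.re_sum, Matrix.conjTranspose_apply,
      Complex.normSq_eq_conj_mul_self, Complex.normSq_apply]
  rw [htr]
  calc ∑ i, Complex.normSq ((C *ᵥ w) i)
      ≤ ∑ i, (∑ j, Complex.normSq (C i j)) * (∑ j, Complex.normSq (w j)) := by
        apply Finset.sum_le_sum
        intro i _
        simpa [Matrix.mulVec, dotProduct] using cs_row (fun j => C i j) w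
    _ = (∑ j, ∑ i, Complex.normSq (C i j)) * ∑ i, Complex.normSq (w i) := by
        rw [← Finset.sum_mul, Finset.sum_comm]
set_option maxHeartbeats 1000000 in
lemma core {P Q ρ : Matrix (Fin N) (Fin N) ℂ} (hP : IsProjection P) (hQ : IsProjection Q)
    (hρ : IsDensity ρ) {c : ℝ} (hc : 0 ≤ c)
    (hab : c + 1 ≤ ((ρ * P).trace).re + ((ρ * Q).trace).re) :
    c ^ 2 ≤ ((P * Q).trace).re := by
  classical
  have hPpsd := proj_psd hP
  have hQpsd := proj_psd hQ
  have htrPQ : 0 ≤ ((P * Q).trace).re := trace_mul_psd_nonneg hPpsd hQpsd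
  set H : Matrix (Fin N) (Fin N) ℂ := P + Q with hHdef
  have hH : H.IsHermitian := hP.1.add hQ.1
  set U : Matrix (Fin N) (Fin N) ℂ :=
    (Matrix.IsHermitian.eigenvectorUnitary hH : Matrix (Fin N) (Fin N) ℂ) with hUdef
  set lam : Fin N → ℝ := hH.eigenvalues with hlam
  set σ : Matrix (Fin N) (Fin N) ℂ := Uᴴ * ρ * U with hσdef
  have hσpsd : σ.PosSemidef := hρ.1.conjTranspose_mul_mul_same U
  have hUU : U * Uᴴ = 1 := by
    have h := (Matrix.IsHermitian.eigenvectorUnitary hH).prop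
    rw [Unitary.mem_iff] at h
    simpa [Matrix.star_eq_conjTranspose] using h.2
  -- trace identity
  have h1 : (ρ * H).trace = (σ * Matrix.diagonal (fun i => (lam i : ℂ))).trace := by
    conv_lhs => rw [hH.spectral_theorem]
    rw [Unitary.conjStarAlgAut_apply, Matrix.star_eq_conjTranspose]
    rw [show ρ * (U * Matrix.diagonal (RCLike.ofReal ∘ lam) * Uᴴ) =
        (ρ * U * Matrix.diagonal (RCLike.ofReal ∘ lam)) * Uᴴ by simp [Matrix.mul_assoc],
      Matrix.trace_mul_comm]
    congr 1
    simp [hσdef, Matrix.mul_assoc]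
    rfl
  have h2 : ((ρ * H).trace).re = ∑ i, lam i * (σ i i).re := by
    rw [h1, Matrix.trace, Complex.re_sum]
    apply Finset.sum_congr rfl
    intro i _
    rw [Matrix.diag_apply, Matrix.mul_diagonal]
    simp [Complex.mul_re, mul_comm]
  have hdnn : ∀ i, 0 ≤ (σ i i).re := fun i => psd_diag_re_nonneg hσpsd i
  have hdsum : ∑ i, (σ i i).re = 1 := by
    have hts : σ.trace = 1 := by
      rw [hσdef, Matrix.trace_mul_cycle, hUU, Matrix.one_mul, hρ.2]
    have := congrArg Complex.re hts
    rwa [Matrix.trace, Complex.re_sum] at this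
  set s : ℝ := ((ρ * P).trace).re + ((ρ * Q).trace).re with hs
  have hseq : s = ∑ i, lam i * (σ i i).re := by
    rw [← h2, hs, hHdef, mul_add, Matrix.trace_add, Complex.add_re]
  have hexj : ∃ j, s ≤ lam j := by
    by_contra hcon
    push_neg at hcon
    obtain ⟨i0, hi0⟩ : ∃ i, 0 < (σ i i).re := by
      by_contra h'
      push_neg at h'
      have : ∑ i, (σ i i).re ≤ 0 := Finset.sum_nonpos fun i _ => h' i
      linarith
    have hlt : ∑ i, lam i * (σ i i).re < ∑ i, s * (σ i i).re := by
      apply Finset.sum_lt_sum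
      · exact fun i _ => mul_le_mul_of_nonneg_right (le_of_lt (hcon i)) (hdnn i)
      · exact ⟨i0, Finset.mem_univ _, mul_lt_mul_of_pos_right (hcon i0) hi0⟩
    rw [← Finset.mul_sum, hdsum, mul_one] at hlt
    linarith [hseq ▸ hlt]
  obtain ⟨j, hj⟩ := hexj
  set lj : ℝ := lam j with hlj
  obtain ⟨v, hHv, hvne⟩ : ∃ v : Fin N → ℂ, H *ᵥ v = lj • v ∧ v ≠ 0 := by
    refine ⟨⇑(hH.eigenvectorBasis j), hH.mulVec_eigenvectorBasis j, ?_⟩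
    have hn := (hH.eigenvectorBasis).orthonormal.1 j
    intro h0
    rw [show hH.eigenvectorBasis j = 0 from by simpa using congrArg (WithLp.toLp 2) h0] at hn
    simp at hn
  -- eigen-relations
  have hPQv : (P * Q) *ᵥ v = lj • (P *ᵥ v) - P *ᵥ v := by
    have e1 : P *ᵥ (H *ᵥ v) = P *ᵥ v + (P * Q) *ᵥ v := by
      rw [Matrix.mulVec_mulVec, hHdef, mul_add, hP.2, Matrix.add_mulVec]
    have e2 : P *ᵥ (H *ᵥ v) = lj • (P *ᵥ v) := by
      rw [hHv, Matrix.mulVec_smul]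
    rw [e2] at e1
    exact (eq_sub_of_add_eq' e1.symm)
  have hQPv : (Q * P) *ᵥ v = lj • (Q *ᵥ v) - Q *ᵥ v := by
    have e1 : Q *ᵥ (H *ᵥ v) = (Q * P) *ᵥ v + Q *ᵥ v := by
      rw [Matrix.mulVec_mulVec, hHdef, mul_add, hQ.2, Matrix.add_mulVec]
    have e2 : Q *ᵥ (H *ᵥ v) = lj • (Q *ᵥ v) := by
      rw [hHv, Matrix.mulVec_smul]
    rw [e2] at e1
    exact (eq_sub_of_add_eq e1.symm)
  set w : Fin N → ℂ := Q *ᵥ v with hw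
  have hMw : (Q * P * Q) *ᵥ w = ((lj - 1) ^ 2 : ℝ) • w := by
    have e0 : (Q * P * Q) *ᵥ w = Q *ᵥ ((P * Q) *ᵥ v) := by
      rw [hw, Matrix.mulVec_mulVec, Matrix.mulVec_mulVec, Matrix.mul_assoc, hQ.2,
        ← Matrix.mul_assoc]
    rw [e0, hPQv]
    have e1 : Q *ᵥ (lj • (P *ᵥ v) - P *ᵥ v) = lj • (Q *ᵥ (P *ᵥ v)) - Q *ᵥ (P *ᵥ v) := by
      rw [Matrix.mulVec_sub, Matrix.mulVec_smul]
    rw [e1, Matrix.mulVec_mulVec, hQPv]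
    module
  by_cases hwz : w = 0
  · -- Q v = 0, so P v = lj • v and lj ∈ {0,1}
    have hPv : P *ᵥ v = lj • v := by
      have : H *ᵥ v = P *ᵥ v + Q *ᵥ v := by rw [hHdef, Matrix.add_mulVec]
      rw [hHv, ← hw, hwz, add_zero] at this
      exact this.symm
    have hP2v : (lj * lj) • v = lj • v := by
      have : P *ᵥ (P *ᵥ v) = lj • (lj • v) := by rw [hPv, Matrix.mulVec_smul, hPv]
      rw [Matrix.mulVec_mulVec, hP.2, hPv] at this
      rw [mul_smul]
      exact this.symm
    have hl : lj * lj = lj := by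
      have h0 : (lj * lj - lj) • v = 0 := by
        rw [sub_smul, hP2v, sub_self]
      rcases smul_eq_zero.mp h0 with h | h
      · exact sub_eq_zero.mp h
      · exact absurd h hvne
    have hc0 : c = 0 := by nlinarith
    rw [hc0]
    simpa using htrPQ
  · -- main case
    have hMpsd : (Q * P * Q).PosSemidef := by
      have := hPpsd.conjTranspose_mul_mul_same Q
      rwa [hQ.1.eq] at this
    have hray := rayleigh hMpsd w
    set S : ℝ := ∑ i, Complex.normSq (w i) with hS
    have hSpos : 0 < S := by
      obtain ⟨i, hi⟩ : ∃ i, w i ≠ 0 := by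
        by_contra h'
        push_neg at h'
        exact hwz (funext h')
      exact Finset.sum_pos' (fun i _ => Complex.normSq_nonneg _)
        ⟨i, Finset.mem_univ _, Complex.normSq_pos.mpr hi⟩
    have hlhs : (star w ⬝ᵥ ((Q * P * Q) *ᵥ w)).re = (lj - 1) ^ 2 * S := by
      rw [hMw, hS, Finset.mul_sum]
      simp only [dotProduct, Pi.star_apply, Pi.smul_apply, Complex.re_sum]
      apply Finset.sum_congr rfl
      intro i _
      simp [Complex.star_def, Complex.mul_re, Complex.mul_im, Complex.normSq_apply,
        ← Complex.ofReal_pow, Complex.sub_re, Complex.add_re, Complex.one_re,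
        Complex.ofReal_re, Complex.ofReal_im, Complex.sub_im, Complex.add_im, Complex.one_im]
      ring
    rw [hlhs] at hray
    have hμ : (lj - 1) ^ 2 ≤ ((Q * P * Q).trace).re :=
      le_of_mul_le_mul_right hray hSpos
    have htr : ((Q * P * Q).trace).re = ((P * Q).trace).re := by
      rw [Matrix.trace_mul_cycle, hQ.2, Matrix.trace_mul_comm]
    rw [htr] at hμ
    have hcle : c ≤ lj - 1 := by linarith
    calc c ^ 2 ≤ (lj - 1) ^ 2 := pow_le_pow_left₀ hc hcle 2
      _ ≤ _ := hμ

lemma width_attained {Ω : Type*} [Fintype Ω] [Nonempty Ω] [MetricSpace Ω]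
    (ε : ℝ) (p : Ω → ℝ) (hp0 : ∀ x, 0 ≤ p x) (hp1 : 1 - ε ≤ ∑ x, p x) :
    ∃ x : Ω, 1 - ε ≤ ∑ y ∈ mball x (overallWidth ε p), p y := by
  classical
  set S : Set ℝ := {w : ℝ | 0 < w ∧ ∃ x : Ω, 1 - ε ≤ ∑ y ∈ mball x w, p y} with hSdef
  have hSne : S.Nonempty := by
    obtain ⟨x₀⟩ := ‹Nonempty Ω›
    refine ⟨2 * (Finset.univ.sup' Finset.univ_nonempty (fun y => dist x₀ y)) + 1, ?_, x₀, ?_⟩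
    · have h0 : (0:ℝ) ≤ Finset.univ.sup' Finset.univ_nonempty (fun y => dist x₀ y) :=
        le_trans dist_nonneg (Finset.le_sup' _ (Finset.mem_univ x₀))
      linarith
    · have hball : mball x₀ (2 * (Finset.univ.sup' Finset.univ_nonempty (fun y => dist x₀ y)) + 1)
          = Finset.univ := by
        apply Finset.eq_univ_iff_forall.mpr
        intro y
        simp only [mball, Finset.mem_filter, Finset.mem_univ, true_and]
        have := Finset.le_sup' (fun y => dist x₀ y) (Finset.mem_univ y)
        linarith
      rw [hball]
      exact hp1
  have hSbdd : BddBelow S := ⟨0, fun w hw => le_of_lt hw.1⟩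
  set W : ℝ := sInf S with hW
  -- choose δ
  set D : Finset ℝ := (Finset.univ ×ˢ Finset.univ).image (fun q : Ω × Ω => dist q.1 q.2) with hD
  set T : Finset ℝ := D.filter (fun d => W / 2 < d) with hT
  set δ : ℝ := if h : T.Nonempty then T.min' h * 2 - W else 1 with hδdef
  have hδpos : 0 < δ := by
    rw [hδdef]
    split_ifs with h
    · have h2 : W / 2 < T.min' h := (Finset.mem_filter.mp (T.min'_mem h)).2
      linarith
    · norm_num
  obtain ⟨w', hw'S, hw'lt⟩ : ∃ w' ∈ S, w' < W + δ :=
    exists_lt_of_csInf_lt hSne (by linarith [hδpos])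
  obtain ⟨hw'pos, x, hx⟩ := hw'S
  refine ⟨x, le_trans hx (Finset.sum_le_sum_of_subset_of_nonneg ?_ (fun y _ _ => hp0 y))⟩
  intro y hy
  rw [mball, Finset.mem_filter] at hy ⊢
  refine ⟨Finset.mem_univ y, ?_⟩
  by_contra hcon
  push_neg at hcon
  have hdT : dist x y ∈ T :=
    Finset.mem_filter.mpr ⟨Finset.mem_image.mpr
      ⟨(x, y), Finset.mem_product.mpr ⟨Finset.mem_univ _, Finset.mem_univ _⟩, rfl⟩, hcon⟩
  have hTne : T.Nonempty := ⟨_, hdT⟩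
  have hmin : T.min' hTne ≤ dist x y := Finset.min'_le _ _ hdT
  have hδeq : δ = T.min' hTne * 2 - W := by rw [hδdef, dif_pos hTne]
  have : dist x y ≤ w' / 2 := hy.2
  linarith

end AuxUW

/-- Uncertainty relation for joint localizability of two PVMs, in terms of
    overall widths. -/
theorem overall_width_tradeoff {N : ℕ} {ΩA ΩB : Type*}
    [Fintype ΩA] [Nonempty ΩA] [MetricSpace ΩA]
    [Fintype ΩB] [Nonempty ΩB] [MetricSpace ΩB]
    (A : ΩA → Matrix (Fin N) (Fin N) ℂ) (B : ΩB → Matrix (Fin N) (Fin N) ℂ)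
    (hAproj : ∀ x, IsProjection (A x)) (hBproj : ∀ y, IsProjection (B y))
    (hAorth : ∀ x x', x ≠ x' → A x * A x' = 0)
    (hBorth : ∀ y y', y ≠ y' → B y * B y' = 0)
    (hAsum : ∑ x, A x = 1) (hBsum : ∑ y, B y = 1)
    (ρ : Matrix (Fin N) (Fin N) ℂ) (hρ : IsDensity ρ)
    (ε₁ ε₂ : ℝ) (hε₁ : ε₁ ∈ Set.Icc (0 : ℝ) 1) (hε₂ : ε₂ ∈ Set.Icc (0 : ℝ) 1)
    (hε : ε₁ + ε₂ ≤ 1)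
    (hpos : 0 < Finset.univ.sup' Finset.univ_nonempty
      (fun p : ΩA × ΩB => ((A p.1 * B p.2).trace).re)) :
    (1 - ε₁ - ε₂) ^ 2 /
        Finset.univ.sup' Finset.univ_nonempty
          (fun p : ΩA × ΩB => ((A p.1 * B p.2).trace).re) ≤
      (Finset.univ.sup' Finset.univ_nonempty
          (fun x : ΩA => ((mball x (overallWidth ε₁ (probDist ρ A))).card : ℝ))) *
      (Finset.univ.sup' Finset.univ_nonempty
          (fun y : ΩB => ((mball y (overallWidth ε₂ (probDist ρ B))).card : ℝ))) := by
  classical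
  set M : ℝ := Finset.univ.sup' Finset.univ_nonempty
      (fun p : ΩA × ΩB => ((A p.1 * B p.2).trace).re) with hMdef
  have hpA0 : ∀ x, 0 ≤ probDist ρ A x :=
    fun x => trace_mul_psd_nonneg hρ.1 (proj_psd (hAproj x))
  have hpB0 : ∀ y, 0 ≤ probDist ρ B y :=
    fun y => trace_mul_psd_nonneg hρ.1 (proj_psd (hBproj y))
  have hpAsum : ∑ x, probDist ρ A x = 1 := by
    calc ∑ x, ((ρ * A x).trace).re = ((∑ x, ρ * A x).trace).re := by
          rw [Matrix.trace_sum, Complex.re_sum]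
      _ = 1 := by rw [← Finset.mul_sum, hAsum, mul_one, hρ.2, Complex.one_re]
  have hpBsum : ∑ y, probDist ρ B y = 1 := by
    calc ∑ y, ((ρ * B y).trace).re = ((∑ y, ρ * B y).trace).re := by
          rw [Matrix.trace_sum, Complex.re_sum]
      _ = 1 := by rw [← Finset.mul_sum, hBsum, mul_one, hρ.2, Complex.one_re]
  obtain ⟨x₀, hx₀⟩ := width_attained ε₁ (probDist ρ A) hpA0 (by rw [hpAsum]; linarith [hε₁.1])
  obtain ⟨y₀, hy₀⟩ := width_attained ε₂ (probDist ρ B) hpB0 (by rw [hpBsum]; linarith [hε₂.1])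
  set SA : Finset ΩA := mball x₀ (overallWidth ε₁ (probDist ρ A)) with hSA
  set SB : Finset ΩB := mball y₀ (overallWidth ε₂ (probDist ρ B)) with hSB
  set P : Matrix (Fin N) (Fin N) ℂ := ∑ x ∈ SA, A x with hP
  set Q : Matrix (Fin N) (Fin N) ℂ := ∑ y ∈ SB, B y with hQ
  have hPproj : IsProjection P := by
    constructor
    · show P.conjTranspose = P
      rw [hP, Matrix.conjTranspose_sum]
      exact Finset.sum_congr rfl fun x _ => (hAproj x).1.eq
    · rw [hP, Finset.sum_mul_sum]
      refine Finset.sum_congr rfl fun x hx => ?_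
      rw [Finset.sum_eq_single_of_mem x hx fun x' _ hne => hAorth x x' (Ne.symm hne)]
      exact (hAproj x).2
  have hQproj : IsProjection Q := by
    constructor
    · show Q.conjTranspose = Q
      rw [hQ, Matrix.conjTranspose_sum]
      exact Finset.sum_congr rfl fun y _ => (hBproj y).1.eq
    · rw [hQ, Finset.sum_mul_sum]
      refine Finset.sum_congr rfl fun y hy => ?_
      rw [Finset.sum_eq_single_of_mem y hy fun y' _ hne => hBorth y y' (Ne.symm hne)]
      exact (hBproj y).2
  have htrP : ((ρ * P).trace).re = ∑ x ∈ SA, probDist ρ A x := by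
    rw [hP, Finset.mul_sum, Matrix.trace_sum, Complex.re_sum]
    rfl
  have htrQ : ((ρ * Q).trace).re = ∑ y ∈ SB, probDist ρ B y := by
    rw [hQ, Finset.mul_sum, Matrix.trace_sum, Complex.re_sum]
    rfl
  have hcore : (1 - ε₁ - ε₂) ^ 2 ≤ ((P * Q).trace).re := by
    refine core hPproj hQproj hρ (by linarith) ?_
    rw [htrP, htrQ]
    linarith
  have hPQ : ((P * Q).trace).re ≤ (SA.card : ℝ) * (SB.card : ℝ) * M := by
    have hexp : ((P * Q).trace).re = ∑ x ∈ SA, ∑ y ∈ SB, ((A x * B y).trace).re := by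
      rw [hP, hQ, Finset.sum_mul_sum, Matrix.trace_sum, Complex.re_sum]
      refine Finset.sum_congr rfl fun x _ => ?_
      rw [Matrix.trace_sum, Complex.re_sum]
    rw [hexp]
    calc ∑ x ∈ SA, ∑ y ∈ SB, ((A x * B y).trace).re
        ≤ ∑ x ∈ SA, ∑ y ∈ SB, M := by
          refine Finset.sum_le_sum fun x _ => Finset.sum_le_sum fun y _ => ?_
          exact Finset.le_sup' (fun p : ΩA × ΩB => ((A p.1 * B p.2).trace).re)
            (Finset.mem_univ (x, y))
      _ = (SA.card : ℝ) * (SB.card : ℝ) * M := by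
          simp [Finset.sum_const, mul_assoc]
  have hcA : (SA.card : ℝ) ≤ Finset.univ.sup' Finset.univ_nonempty
      (fun x : ΩA => ((mball x (overallWidth ε₁ (probDist ρ A))).card : ℝ)) :=
    Finset.le_sup' (fun x : ΩA => ((mball x (overallWidth ε₁ (probDist ρ A))).card : ℝ))
      (Finset.mem_univ x₀)
  have hcB : (SB.card : ℝ) ≤ Finset.univ.sup' Finset.univ_nonempty
      (fun y : ΩB => ((mball y (overallWidth ε₂ (probDist ρ B))).card : ℝ)) :=
    Finset.le_sup' (fun y : ΩB => ((mball y (overallWidth ε₂ (probDist ρ B))).card : ℝ))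
      (Finset.mem_univ y₀)
  rw [div_le_iff₀ hpos]
  calc (1 - ε₁ - ε₂) ^ 2 ≤ ((P * Q).trace).re := hcore
    _ ≤ (SA.card : ℝ) * (SB.card : ℝ) * M := hPQ
    _ ≤ _ := by
        refine mul_le_mul_of_nonneg_right ?_ (le_of_lt hpos)
        exact mul_le_mul hcA hcB (Nat.cast_nonneg _) (le_trans (Nat.cast_nonneg _) hcA)
end

section
/- Let E be a PVM and E₁ a POVM on a finite metric space (Ω,d). For any ε ∈ (0,1], the error bar width satisfies W_ε(E₁,E) ≤ (2/ε)·D_W(E₁,E), where D_W is Werner's distance D_W(E₁,E) = sup_{f∈Λ} ‖E₁(f) − E(f)‖ with Λ the Lipschitz ball. -/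
set_option maxHeartbeats 1000000
set_option synthInstance.maxHeartbeats 400000

open scoped ComplexOrder

/-- The error bar width W_ε(E₁,E): the infimum of w > 0 such that whenever a
    state ρ is perfectly localized at x for E, the E₁-distribution of ρ is
    concentrated on O_d(x,w) up to ε. -/
noncomputable def errorBarWidth {N : ℕ} {Ω : Type*} [Fintype Ω] [MetricSpace Ω]
    (ε : ℝ) (E₁ E : Ω → Matrix (Fin N) (Fin N) ℂ) : ℝ :=
  sInf {w : ℝ | 0 < w ∧ ∀ (x : Ω) (ρ : Matrix (Fin N) (Fin N) ℂ), IsDensity ρ →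
    ((ρ * E x).trace).re = 1 → 1 - ε ≤ ∑ x' ∈ mball x w, ((ρ * E₁ x').trace).re}

/-- Werner's geometric distance D_W(E₁,E) = sup_{f ∈ Λ} ‖E₁(f) − E(f)‖, where Λ
    is the Lipschitz ball {f : |f(x)−f(y)| ≤ d(x,y)} and F(f) = Σ_x f(x)·F_x. -/
noncomputable def wernerDist {N : ℕ} {Ω : Type*} [Fintype Ω] [MetricSpace Ω]
    (E₁ E : Ω → Matrix (Fin N) (Fin N) ℂ) : ℝ :=
  sSup {r : ℝ | ∃ f : Ω → ℝ, (∀ x y, |f x - f y| ≤ dist x y) ∧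
    r = opNorm (∑ x, (f x : ℂ) • (E₁ x - E x))}

/-! ### Auxiliary lemmas -/

/-- The quadratic form of a matrix is bounded by its operator norm. -/
lemma re_quadform_le' {N : ℕ} (A : Matrix (Fin N) (Fin N) ℂ) (v : Fin N → ℂ) :
    (dotProduct (star v) (A.mulVec v)).re
      ≤ opNorm A * (dotProduct (star v) v).re := by
  set x : EuclideanSpace ℂ (Fin N) := (WithLp.equiv 2 _).symm v with hx
  have h1 : dotProduct (star v) (A.mulVec v)
      = inner (𝕜 := ℂ) x (Matrix.toEuclideanCLM (𝕜 := ℂ) A x) := by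
    rw [hx]
    exact dotProduct_comm _ _
  have h2 : dotProduct (star v) v = inner (𝕜 := ℂ) x x := by
    rw [hx]
    exact dotProduct_comm _ _
  have h3 : (inner (𝕜 := ℂ) x x).re = ‖x‖ ^ 2 := by
    simpa using inner_self_eq_norm_sq (𝕜 := ℂ) x
  rw [h1, h2, h3]
  calc (inner (𝕜 := ℂ) x (Matrix.toEuclideanCLM (𝕜 := ℂ) A x)).re
      ≤ ‖inner (𝕜 := ℂ) x (Matrix.toEuclideanCLM (𝕜 := ℂ) A x)‖ := Complex.re_le_norm _
    _ ≤ ‖x‖ * ‖Matrix.toEuclideanCLM (𝕜 := ℂ) A x‖ := norm_inner_le_norm (𝕜 := ℂ) _ _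
    _ ≤ ‖x‖ * (‖Matrix.toEuclideanCLM (𝕜 := ℂ) A‖ * ‖x‖) :=
        mul_le_mul_of_nonneg_left (ContinuousLinearMap.le_opNorm _ _) (norm_nonneg x)
    _ = opNorm A * ‖x‖ ^ 2 := by rw [opNorm]; ring

/-- The quadratic form of a Hermitian matrix is real. -/
lemma herm_quadform_im {N : ℕ} {A : Matrix (Fin N) (Fin N) ℂ} (hA : A.IsHermitian)
    (v : Fin N → ℂ) : (dotProduct (star v) (A.mulVec v)).im = 0 := by
  have h : dotProduct (star v) (A.mulVec v)
      = star (dotProduct (star (A.mulVec v)) v) := Matrix.star_dotProduct _ _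
  rw [Matrix.star_mulVec, ← Matrix.dotProduct_mulVec, hA.eq] at h
  have h2 : (starRingEnd ℂ) (dotProduct (star v) (A.mulVec v))
      = dotProduct (star v) (A.mulVec v) := h.symm
  exact Complex.conj_eq_iff_im.mp h2

/-- For a Hermitian `A`, `‖A‖•1 - A` is positive semidefinite. -/
lemma smul_one_sub_posSemidef {N : ℕ} {A : Matrix (Fin N) (Fin N) ℂ} (hA : A.IsHermitian) :
    (((opNorm A : ℂ) • 1 - A)).PosSemidef := by
  refine Matrix.posSemidef_iff_dotProduct_mulVec.mpr ⟨?_, ?_⟩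
  · apply Matrix.IsHermitian.sub _ hA
    unfold Matrix.IsHermitian
    rw [Matrix.conjTranspose_smul, Matrix.conjTranspose_one]
    simp
  · intro v
    have hexp : dotProduct (star v) ((((opNorm A : ℂ) • 1 - A)).mulVec v)
        = (opNorm A : ℂ) * dotProduct (star v) v
          - dotProduct (star v) (A.mulVec v) := by
      rw [Matrix.sub_mulVec, dotProduct_sub, Matrix.smul_mulVec,
        Matrix.one_mulVec, dotProduct_smul, smul_eq_mul]
    rw [hexp]
    have hQ : (0 : ℂ) ≤ dotProduct (star v) v := by
      have := (Matrix.PosSemidef.one (n := Fin N) (R := ℂ)).dotProduct_mulVec_nonneg v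
      rwa [Matrix.one_mulVec] at this
    rw [Complex.le_def] at hQ ⊢
    obtain ⟨hQre, hQim⟩ := hQ
    simp only [Complex.zero_re, Complex.zero_im, Complex.sub_re, Complex.sub_im] at *
    constructor
    · rw [Complex.re_ofReal_mul]
      have := re_quadform_le' A v
      linarith
    · rw [Complex.im_ofReal_mul, herm_quadform_im hA v, ← hQim]
      ring

open scoped MatrixOrder in
lemma psd_eq_ct_mul {N : ℕ} {M : Matrix (Fin N) (Fin N) ℂ} (hM : M.PosSemidef) :
    ∃ B : Matrix (Fin N) (Fin N) ℂ, M = B.conjTranspose * B := by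
  obtain ⟨B, hB⟩ := CStarAlgebra.nonneg_iff_eq_star_mul_self.mp hM.nonneg
  exact ⟨B, hB⟩

/-- Trace of a PSD matrix has nonnegative real part. -/
lemma posSemidef_trace_re_nonneg {N : ℕ} {M : Matrix (Fin N) (Fin N) ℂ}
    (hM : M.PosSemidef) : 0 ≤ M.trace.re := by
  obtain ⟨B, rfl⟩ := psd_eq_ct_mul hM
  rw [Matrix.trace, Complex.re_sum]
  refine Finset.sum_nonneg fun i _ => ?_
  rw [Matrix.diag_apply, Matrix.mul_apply, Complex.re_sum]
  refine Finset.sum_nonneg fun j _ => ?_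
  rw [Matrix.conjTranspose_apply]
  simp only [RCLike.star_def, Complex.mul_re, Complex.conj_re, Complex.conj_im]
  nlinarith [sq_nonneg (B j i).re, sq_nonneg (B j i).im]

/-- Trace of a product of PSD matrices has nonnegative real part. -/
lemma trace_mul_re_nonneg {N : ℕ} {ρ M : Matrix (Fin N) (Fin N) ℂ}
    (hρ : ρ.PosSemidef) (hM : M.PosSemidef) : 0 ≤ ((ρ * M).trace).re := by
  obtain ⟨B, hB⟩ := psd_eq_ct_mul hM
  have h : (ρ * M).trace = (B * ρ * B.conjTranspose).trace := by
    rw [hB, ← mul_assoc, Matrix.trace_mul_cycle]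
  rw [h]
  exact posSemidef_trace_re_nonneg (hρ.mul_mul_conjTranspose_same B)

/-- Key bound: for a density matrix ρ and Hermitian A, Re tr(ρA) ≤ ‖A‖. -/
lemma re_trace_mul_le_opNorm {N : ℕ} {ρ A : Matrix (Fin N) (Fin N) ℂ}
    (hρ : ρ.PosSemidef) (hρ1 : ρ.trace = 1) (hA : A.IsHermitian) :
    ((ρ * A).trace).re ≤ opNorm A := by
  have h0 := trace_mul_re_nonneg hρ (smul_one_sub_posSemidef hA)
  have hexp : ρ * (((opNorm A : ℂ)) • 1 - A) = ((opNorm A : ℂ)) • ρ - ρ * A := by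
    rw [mul_sub, mul_smul_comm, mul_one]
  rw [hexp, Matrix.trace_sub, Matrix.trace_smul, smul_eq_mul, hρ1, mul_one,
    Complex.sub_re, Complex.ofReal_re] at h0
  linarith

lemma opNorm_nonneg' {N : ℕ} (A : Matrix (Fin N) (Fin N) ℂ) : 0 ≤ opNorm A :=
  norm_nonneg _

lemma opNorm_sum_smul_le {N : ℕ} {ι : Type*} (s : Finset ι) (c : ι → ℂ)
    (g : ι → Matrix (Fin N) (Fin N) ℂ) :
    opNorm (∑ i ∈ s, c i • g i) ≤ ∑ i ∈ s, ‖c i‖ * opNorm (g i) := by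
  unfold opNorm
  rw [map_sum]
  refine (norm_sum_le _ _).trans (Finset.sum_le_sum fun i _ => ?_)
  rw [map_smul]
  exact norm_smul_le (c i) (Matrix.toEuclideanCLM (𝕜 := ℂ) (g i))

/-- min against a constant is 1-Lipschitz. -/
lemma abs_min_sub_min_le (a b c : ℝ) : |min a c - min b c| ≤ |a - b| := by
  rcases le_total a c with h1 | h1 <;> rcases le_total b c with h2 | h2 <;>
    rw [abs_sub_le_iff] <;> constructor <;>
    cases abs_cases (a - b) <;>
    simp only [min_eq_left, min_eq_right, h1, h2] <;>
    linarith

/-- Busch–Pearson: the error bar width is controlled by Werner's distance,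
    W_ε(E₁,E) ≤ (2/ε)·D_W(E₁,E). -/
theorem errorBarWidth_le_wernerDist {N : ℕ} {Ω : Type*} [Fintype Ω] [MetricSpace Ω]
    (E E₁ : Ω → Matrix (Fin N) (Fin N) ℂ)
    (hEproj : ∀ x, IsProjection (E x))
    (hEorth : ∀ x x', x ≠ x' → E x * E x' = 0)
    (hEsum : ∑ x, E x = 1)
    (hE₁pos : ∀ x, (E₁ x).PosSemidef)
    (hE₁sum : ∑ x, E₁ x = 1)
    (ε : ℝ) (hε : ε ∈ Set.Ioc (0 : ℝ) 1) :
    errorBarWidth ε E₁ E ≤ (2 / ε) * wernerDist E₁ E := by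
  classical
  obtain ⟨hε0, hε1⟩ := hε
  set W : Set ℝ := {r : ℝ | ∃ f : Ω → ℝ, (∀ x y, |f x - f y| ≤ dist x y) ∧
    r = opNorm (∑ x, (f x : ℂ) • (E₁ x - E x))} with hW
  have hsum0 : ∑ x, (E₁ x - E x) = 0 := by
    rw [Finset.sum_sub_distrib, hE₁sum, hEsum, sub_self]
  -- W is bounded above
  have hbdd : BddAbove W := by
    rcases isEmpty_or_nonempty Ω with h | h
    · exact ⟨0, by rintro r ⟨f, hf, rfl⟩; simp [opNorm]⟩
    · obtain ⟨x₀⟩ := h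
      refine ⟨∑ x, dist x x₀ * opNorm (E₁ x - E x), ?_⟩
      rintro r ⟨f, hf, rfl⟩
      have hzero : ∑ x : Ω, ((f x₀ : ℂ)) • (E₁ x - E x) = 0 := by
        rw [← Finset.smul_sum, hsum0, smul_zero]
      have key : ∑ x : Ω, ((f x : ℂ)) • (E₁ x - E x)
          = ∑ x : Ω, (((f x - f x₀ : ℝ) : ℂ)) • (E₁ x - E x) := by
        rw [eq_comm]
        calc ∑ x : Ω, (((f x - f x₀ : ℝ) : ℂ)) • (E₁ x - E x)
            = ∑ x : Ω, (((f x : ℂ)) • (E₁ x - E x) - ((f x₀ : ℂ)) • (E₁ x - E x)) := by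
              refine Finset.sum_congr rfl fun x _ => ?_
              push_cast
              rw [sub_smul]
          _ = ∑ x : Ω, ((f x : ℂ)) • (E₁ x - E x)
                - ∑ x : Ω, ((f x₀ : ℂ)) • (E₁ x - E x) := Finset.sum_sub_distrib _ _
          _ = _ := by rw [hzero, sub_zero]
      rw [key]
      refine (opNorm_sum_smul_le _ _ _).trans (Finset.sum_le_sum fun x _ => ?_)
      refine mul_le_mul_of_nonneg_right ?_ (opNorm_nonneg' _)
      rw [Complex.norm_real]
      calc |f x - f x₀| ≤ dist x x₀ := hf x x₀
        _ = dist x x₀ := rfl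
  have hD0 : 0 ≤ wernerDist E₁ E := by
    refine le_csSup hbdd ⟨0, fun x y => by simpa using dist_nonneg, ?_⟩
    simp [opNorm]
  set D := wernerDist E₁ E with hD
  clear_value D
  -- reduce to: for all δ > 0, errorBarWidth ≤ 2/ε * D + δ
  refine le_of_forall_pos_le_add fun δ hδ => ?_
  set w : ℝ := 2 / ε * D + δ with hwdef
  clear_value w
  have hw0 : 0 < w := by
    have h2D : 0 ≤ 2 / ε * D := mul_nonneg (by positivity) hD0
    rw [hwdef]
    linarith
  refine csInf_le ⟨0, fun y hy => hy.1.le⟩ ⟨hw0, ?_⟩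
  intro x ρ hρ hloc
  -- the Lipschitz test function
  set f : Ω → ℝ := fun y => min (dist x y) (w / 2) with hf
  have hfLip : ∀ y z, |f y - f z| ≤ dist y z := by
    intro y z
    refine (abs_min_sub_min_le _ _ _).trans ?_
    rw [dist_comm x y, dist_comm x z]
    exact abs_dist_sub_le y z x
  have hfx : f x = 0 := by
    simp only [hf, dist_self]
    exact min_eq_left (by linarith)
  have hfnn : ∀ y, 0 ≤ f y := fun y => le_min dist_nonneg (by linarith)
  set p : Ω → ℝ := fun y => ((ρ * E y).trace).re with hp
  set q : Ω → ℝ := fun y => ((ρ * E₁ y).trace).re with hq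
  have hEpos : ∀ y, (E y).PosSemidef := by
    intro y
    have h1 : E y = (E y).conjTranspose * E y := by rw [(hEproj y).1.eq, (hEproj y).2]
    rw [h1]
    exact Matrix.posSemidef_conjTranspose_mul_self _
  have hpnn : ∀ y, 0 ≤ p y := fun y => trace_mul_re_nonneg hρ.1 (hEpos y)
  have hqnn : ∀ y, 0 ≤ q y := fun y => trace_mul_re_nonneg hρ.1 (hE₁pos y)
  have hpsum : ∑ y, p y = 1 := by
    have h1 : (∑ y, ρ * E y) = ρ := by rw [← Finset.mul_sum, hEsum, mul_one]
    calc ∑ y, p y = ((∑ y, ρ * E y).trace).re := by rw [Matrix.trace_sum, Complex.re_sum]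
      _ = 1 := by rw [h1, hρ.2, Complex.one_re]
  have hqsum : ∑ y, q y = 1 := by
    have h1 : (∑ y, ρ * E₁ y) = ρ := by rw [← Finset.mul_sum, hE₁sum, mul_one]
    calc ∑ y, q y = ((∑ y, ρ * E₁ y).trace).re := by rw [Matrix.trace_sum, Complex.re_sum]
      _ = 1 := by rw [h1, hρ.2, Complex.one_re]
  have hpx : p x = 1 := hloc
  have hpzero : ∀ y, y ≠ x → p y = 0 := by
    intro y hy
    have herase : ∑ z ∈ Finset.univ.erase x, p z = 0 := by
      have := Finset.add_sum_erase Finset.univ p (Finset.mem_univ x)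
      rw [hpsum, hpx] at this
      linarith
    have := (Finset.sum_eq_zero_iff_of_nonneg fun z _ => hpnn z).mp herase y
      (Finset.mem_erase.mpr ⟨hy, Finset.mem_univ y⟩)
    exact this
  -- the Hermitian operator A_f
  set Af : Matrix (Fin N) (Fin N) ℂ := ∑ y, ((f y : ℂ)) • (E₁ y - E y) with hAf
  have hAfherm : Af.IsHermitian := by
    rw [hAf]
    unfold Matrix.IsHermitian
    rw [Matrix.conjTranspose_sum]
    refine Finset.sum_congr rfl fun y _ => ?_
    rw [Matrix.conjTranspose_smul, Matrix.conjTranspose_sub, (hE₁pos y).1.eq,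
      (hEproj y).1.eq]
    simp
  have htr : ((ρ * Af).trace).re = ∑ y, f y * (q y - p y) := by
    rw [hAf, Finset.mul_sum, Matrix.trace_sum, Complex.re_sum]
    refine Finset.sum_congr rfl fun y _ => ?_
    rw [mul_smul_comm, Matrix.trace_smul, smul_eq_mul, Complex.re_ofReal_mul, mul_sub,
      Matrix.trace_sub, Complex.sub_re]
  have hfp : ∑ y, f y * p y = 0 := by
    refine Finset.sum_eq_zero fun y _ => ?_
    rcases eq_or_ne y x with rfl | hy
    · rw [hfx, zero_mul]
    · rw [hpzero y hy, mul_zero]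
  have htr2 : ((ρ * Af).trace).re = ∑ y, f y * q y := by
    rw [htr]
    have : ∑ y, f y * (q y - p y) = ∑ y, f y * q y - ∑ y, f y * p y := by
      rw [← Finset.sum_sub_distrib]
      exact Finset.sum_congr rfl fun y _ => by ring
    rw [this, hfp, sub_zero]
  -- upper bound via Werner distance
  have hub : ((ρ * Af).trace).re ≤ D := by
    refine (re_trace_mul_le_opNorm hρ.1 hρ.2 hAfherm).trans ?_
    have hDW : D = sSup W := by rw [hD, hW]; rfl
    rw [hDW]
    exact le_csSup hbdd ⟨f, hfLip, by rw [hAf]⟩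
  -- lower bound
  set s := ∑ x' ∈ mball x w, q x' with hs
  have hsplit : s + ∑ y ∈ Finset.univ.filter (fun y => ¬ dist x y ≤ w / 2), q y = 1 := by
    rw [hs]
    rw [show mball x w = Finset.univ.filter (fun y => dist x y ≤ w / 2) from rfl]
    rw [Finset.sum_filter_add_sum_filter_not]
    exact hqsum
  have hlb : w / 2 * (1 - s) ≤ ∑ y, f y * q y := by
    have h1 : ∑ y ∈ Finset.univ.filter (fun y => ¬ dist x y ≤ w / 2), f y * q y
        ≤ ∑ y, f y * q y := by
      refine Finset.sum_le_sum_of_subset_of_nonneg (Finset.filter_subset _ _) ?_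
      intro y _ _
      exact mul_nonneg (hfnn y) (hqnn y)
    have h2 : ∑ y ∈ Finset.univ.filter (fun y => ¬ dist x y ≤ w / 2), f y * q y
        = w / 2 * (1 - s) := by
      have h3 : ∀ y ∈ Finset.univ.filter (fun y => ¬ dist x y ≤ w / 2),
          f y * q y = w / 2 * q y := by
        intro y hy
        rw [Finset.mem_filter] at hy
        have : f y = w / 2 := min_eq_right (le_of_not_ge hy.2)
        rw [this]
      rw [Finset.sum_congr rfl h3, ← Finset.mul_sum]
      congr 1
      linarith
    linarith
  -- conclude
  have hkey : w / 2 * (1 - s) ≤ D := by rw [← htr2] at hlb; linarith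
  -- from w = 2D/ε + δ and w(1-s)/2 ≤ D, conclude 1 - ε ≤ s
  have hεw : ε * w = 2 * D + ε * δ := by
    rw [hwdef]
    field_simp
  show 1 - ε ≤ s
  nlinarith [hkey, hεw, mul_pos hε0 hδ, hw0, hD0]
end
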